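/- Let w ∈ Σ_n, let R ∈ R(w) be an rc-graph associated to w, and let R = R₀ ⊂ R₁ ⊂ ⋯ ⊂ R_m (m = ℓ(w₀)−ℓ(w)) be the greedy sequence. If R_{i+1} is obtained from R_i by adding the pair (k,b), then (k,b) is a valid label of the Bruhat cover w(R_i) ⋖ w(R_{i+1}) in the labeled Bruhat order (i.e. w(R_i)⁻¹w(R_{i+1}) is a transposition (i',j') with i' ≤ k < j' and b = w(R_i)(i')); moreover, the resulting labeled chain γ(R) from w to w₀ is increasing. -/

import Mathlib

open MvPolynomial

noncomputable section

/-- The symmetric group `Σ_n` on `{0, …, n-1}` (0-indexed model of `{1, …, n}`). -/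
abbrev Perm' (n : ℕ) := Equiv.Perm (Fin n)

/-- The length `ℓ(w)`: the number of inversions of `w`. -/
def invLength {n : ℕ} (w : Perm' n) : ℕ :=
  (Finset.univ.filter (fun p : Fin n × Fin n => p.1 < p.2 ∧ w p.2 < w p.1)).card

/-- The longest permutation `w₀ = n … 2 1`. -/
def w0 (n : ℕ) : Perm' n := Fin.revPerm

/-- `u ⋖ w` in the Bruhat order: `w = u·(k,l)` where `k < l`, `u k < u l`, and no
position strictly between `k` and `l` has a `u`-value between `u k` and `u l`. -/
def BruhatCover {n : ℕ} (u w : Perm' n) : Prop :=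
  ∃ k l : Fin n, k < l ∧ u k < u l ∧
    (∀ i : Fin n, k < i → i < l → ¬(u k < u i ∧ u i < u l)) ∧
    w = u * Equiv.swap k l

/-- The Bruhat order, generated by its covers. -/
def BruhatLE {n : ℕ} : Perm' n → Perm' n → Prop :=
  Relation.ReflTransGen BruhatCover

/-- `u →^{(k,b)} w` is a labeled cover in the labeled Bruhat order (0-indexed):
`u ⋖ w` with `u⁻¹w = (i,j)`, `i ≤ k < j` and `b = u i`. -/
def IsLabeledCover {n : ℕ} (u w : Perm' n) (k b : ℕ) : Prop :=
  ∃ i j : Fin n, i < j ∧ u i < u j ∧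
    (∀ m : Fin n, i < m → m < j → ¬(u i < u m ∧ u m < u j)) ∧
    w = u * Equiv.swap i j ∧ (i : ℕ) ≤ k ∧ k < (j : ℕ) ∧ b = (u i : ℕ)

/-- Strict lexicographic order on labels `(k,b)`. -/
def lexLt (p q : ℕ × ℕ) : Prop := p.1 < q.1 ∨ (p.1 = q.1 ∧ p.2 < q.2)

/-- A saturated labeled chain of length `m` from `u` to `w` in the labeled Bruhat order. -/
structure LabeledChain (n m : ℕ) (u w : Perm' n) where
  c : Fin (m + 1) → Perm' n
  lab : Fin m → ℕ × ℕ
  c_zero : c 0 = u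
  c_last : c (Fin.last m) = w
  step : ∀ i : Fin m, IsLabeledCover (c i.castSucc) (c i.succ) (lab i).1 (lab i).2

/-- A chain is increasing if its labels strictly increase in lexicographic order. -/
def LabeledChain.Increasing {n m : ℕ} {u w : Perm' n} (γ : LabeledChain n m u w) : Prop :=
  ∀ i j : Fin m, i < j → lexLt (γ.lab i) (γ.lab j)

/-- The type of a chain: `α_k` counts labels with first coordinate `k`. -/
def chainType {n m : ℕ} {u w : Perm' n} (γ : LabeledChain n m u w) : Fin n → ℕ :=
  fun k => (Finset.univ.filter (fun i : Fin m => (γ.lab i).1 = (k : ℕ))).card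

/-- `I_α(u,w)`: the number of increasing chains from `u` to `w` of type `α`. -/
def incChainCount (n : ℕ) (u w : Perm' n) (α : Fin n → ℕ) : ℕ :=
  Nat.card ((m : ℕ) × {γ : LabeledChain n m u w // γ.Increasing ∧ chainType γ = α})

/-- The staircase monomial `x^δ = x₁^{n-1} x₂^{n-2} ⋯ x_{n-1}`. -/
def xDelta (n : ℕ) : MvPolynomial (Fin n) ℤ :=
  ∏ i : Fin n, X i ^ (n - 1 - (i : ℕ))

/-- `S` is the family of Schubert polynomials: `S w₀ = x^δ` and
`S w - s_i·(S w) = (x_i - x_{i+1}) · S (w s_i)` whenever `ℓ(w s_i) < ℓ(w)`. -/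
def IsSchubertFamily (n : ℕ) (S : Perm' n → MvPolynomial (Fin n) ℤ) : Prop :=
  S (w0 n) = xDelta n ∧
  ∀ (w : Perm' n) (i : ℕ) (h : i + 1 < n),
    invLength (w * Equiv.swap (⟨i, by omega⟩ : Fin n) ⟨i + 1, h⟩) < invLength w →
    S w - rename (Equiv.swap (⟨i, by omega⟩ : Fin n) ⟨i + 1, h⟩) (S w) =
      (X (⟨i, by omega⟩ : Fin n) - X ⟨i + 1, h⟩) *
        S (w * Equiv.swap (⟨i, by omega⟩ : Fin n) ⟨i + 1, h⟩)

/-- The ideal generated by the elementary symmetric polynomials `e₁, …, e_n`. -/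
def symIdeal (n : ℕ) : Ideal (MvPolynomial (Fin n) ℤ) :=
  Ideal.span ((fun k => esymm (Fin n) ℤ k) '' Set.Icc 1 n)

/-- `g` is the normal form of `f` modulo the ideal of elementary symmetric polynomials :
`f ≡ g` and every monomial of `g` divides `x^δ`.  (For the degree reverse lexicographic
term order with `x₁ < ⋯ < x_n`, the normal form is exactly the unique such `g`.) -/
def IsNormalForm (n : ℕ) (f g : MvPolynomial (Fin n) ℤ) : Prop :=
  f - g ∈ symIdeal n ∧ ∀ d ∈ g.support, ∀ i : Fin n, d i ≤ n - 1 - (i : ℕ)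

def finSubEquiv {n N : ℕ} (h : n ≤ N) : Fin n ≃ {i : Fin N // (i : ℕ) < n} where
  toFun i := ⟨Fin.castLE h i, i.isLt⟩
  invFun j := ⟨(j.1 : ℕ), j.2⟩
  left_inv i := rfl
  right_inv j := rfl

/-- The standard inclusion `Σ_n ⊂ Σ_N`, extending a permutation by fixed points. -/
def permIncl {n N : ℕ} (h : n ≤ N) (u : Perm' n) : Perm' N :=
  u.extendDomain (finSubEquiv h)

/-- `δ` as an exponent vector. -/
def deltaF (n : ℕ) : Fin n →₀ ℕ :=
  Finsupp.equivFunOnFinite.symm fun i => n - 1 - (i : ℕ)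

/-- The type of a chain as an exponent vector. -/
def chainTypeF {n m : ℕ} {u w : Perm' n} (γ : LabeledChain n m u w) : Fin n →₀ ℕ :=
  Finsupp.equivFunOnFinite.symm (chainType γ)

/-- `δ` as an integral exponent vector. -/
def deltaZ (n : ℕ) : Fin n →₀ ℤ :=
  Finsupp.equivFunOnFinite.symm fun i => ((n - 1 - (i : ℕ) : ℕ) : ℤ)

/-- The type of a chain as an integral exponent vector. -/
def chainTypeZ {n m : ℕ} {u w : Perm' n} (γ : LabeledChain n m u w) : Fin n →₀ ℤ :=
  Finsupp.equivFunOnFinite.symm fun k => ((chainType γ k : ℕ) : ℤ)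

/-- The inclusion of polynomials into Laurent polynomials. -/
def toLaurent (n : ℕ) : MvPolynomial (Fin n) ℤ →+* AddMonoidAlgebra ℤ (Fin n →₀ ℤ) :=
  AddMonoidAlgebra.mapDomainRingHom ℤ (Finsupp.mapRange.addMonoidHom (Nat.castAddMonoidHom ℤ))

/-- The complete homogeneous symmetric polynomial `h_a(x₁, …, x_k)` inside
`ℤ[x₁, …, x_n]` (variables are 0-indexed, so the first `k` variables are used). -/
def hpoly (n k a : ℕ) : MvPolynomial (Fin n) ℤ :=
  ∑ s ∈ (Finset.univ.filter (fun i : Fin n => (i : ℕ) < k)).sym a,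
    ((s : Multiset (Fin n)).map X).prod

/-- `h_α = h_{α₁}(x₁) h_{α₂}(x₁,x₂) ⋯ h_{α_{n-1}}(x₁, …, x_{n-1})` (0-indexed `α`). -/
def hAlpha (n : ℕ) (α : Fin n → ℕ) : MvPolynomial (Fin n) ℤ :=
  ∏ i : Fin n, hpoly n ((i : ℕ) + 1) (α i)

/- ## rc-graphs (0-indexed pairs: the paper's pair `(k,b)` is `(k-1, b-1)`) -/

/-- The linear order on rc-graph positions: `(k,b) ≤ (j,a)  ⇔  k < j, or k = j and b ≥ a`. -/
def rcLE (p q : ℕ × ℕ) : Prop := p.1 < q.1 ∨ (p.1 = q.1 ∧ q.2 ≤ p.2)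

instance : DecidableRel rcLE := fun p q => by unfold rcLE; exact inferInstance
instance : IsTrans (ℕ × ℕ) rcLE :=
  ⟨fun a b c h1 h2 => by unfold rcLE at h1 h2 ⊢; omega⟩
instance : IsAntisymm (ℕ × ℕ) rcLE :=
  ⟨fun a b h1 h2 => by unfold rcLE at h1 h2; rw [Prod.ext_iff]; omega⟩
instance : IsTotal (ℕ × ℕ) rcLE := ⟨fun a b => by unfold rcLE; omega⟩

/-- The adjacent transposition `s_{i+1} = (i, i+1)` (0-indexed positions). -/
def adjT (n : ℕ) (i : ℕ) : Perm' n :=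
  if h : i + 1 < n then Equiv.swap ⟨i, by omega⟩ ⟨i + 1, h⟩ else 1

/-- The word `d(R)` of a set of positions: list its elements in the order `rcLE` and
record `k + b` for each pair (0-indexed version of `k + b - 1`). -/
def rcWord (R : Finset (ℕ × ℕ)) : List ℕ :=
  (R.sort rcLE).map (fun p => p.1 + p.2)

/-- The permutation given by a word in the adjacent transpositions. -/
def wordPerm (n : ℕ) (l : List ℕ) : Perm' n :=
  (l.map (adjT n)).prod

/-- The permutation of a set of rc-positions. -/
def rcPerm (n : ℕ) (R : Finset (ℕ × ℕ)) : Perm' n := wordPerm n (rcWord R)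

/-- `R` consists of valid rc-positions: (0-indexed) `k + b + 2 ≤ n`. -/
def IsRC (n : ℕ) (R : Finset (ℕ × ℕ)) : Prop := ∀ p ∈ R, p.1 + p.2 + 2 ≤ n

/-- `R ∈ 𝓡(w)`: `R` is an rc-graph associated to `w`, i.e. `d(R)` is a reduced word for `w`. -/
def AssocRC (n : ℕ) (R : Finset (ℕ × ℕ)) (w : Perm' n) : Prop :=
  IsRC n R ∧ rcPerm n R = w ∧ R.card = invLength w

/-- All valid rc-positions for `Σ_n`. -/
def fullRC (n : ℕ) : Finset (ℕ × ℕ) :=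
  (Finset.range n ×ˢ Finset.range n).filter (fun p => p.1 + p.2 + 2 ≤ n)

/-- One greedy step: adjoin the lexicographically smallest valid pair not in `R`. -/
def GreedyStep (n : ℕ) (R R' : Finset (ℕ × ℕ)) : Prop :=
  ∃ p : ℕ × ℕ, p ∉ R ∧ p.1 + p.2 + 2 ≤ n ∧
    (∀ q : ℕ × ℕ, q.1 + q.2 + 2 ≤ n → q ∉ R → (p.1 < q.1 ∨ (p.1 = q.1 ∧ p.2 ≤ q.2))) ∧
    R' = insert p R

/-- The exponent of `x_i` in `x^R`. -/
def rcType (n : ℕ) (R : Finset (ℕ × ℕ)) : Fin n → ℕ :=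
  fun i => (R.filter (fun p => p.1 = (i : ℕ))).card

/-- `γ = γ(R)`: the chain `γ` is produced from `R` by the greedy sequence. -/
def GreedyRel (n : ℕ) {m : ℕ} (w : Perm' n) (R : Finset (ℕ × ℕ))
    (γ : LabeledChain n m w (w0 n)) : Prop :=
  ∃ Rs : ℕ → Finset (ℕ × ℕ), Rs 0 = R ∧
    (∀ i < m, GreedyStep n (Rs i) (Rs (i + 1))) ∧
    (∀ i : Fin m, γ.lab i ∉ Rs (i : ℕ) ∧ Rs ((i : ℕ) + 1) = insert (γ.lab i) (Rs (i : ℕ))) ∧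
    (∀ i : Fin (m + 1), rcPerm n (Rs (i : ℕ)) = γ.c i)

/- ### auxiliary development -/

namespace Greedy

variable {n : ℕ}

lemma wordPerm_nil : wordPerm n [] = 1 := rfl

lemma wordPerm_cons (c : ℕ) (l : List ℕ) :
    wordPerm n (c :: l) = adjT n c * wordPerm n l := by
  simp [wordPerm]

lemma wordPerm_append (l₁ l₂ : List ℕ) :
    wordPerm n (l₁ ++ l₂) = wordPerm n l₁ * wordPerm n l₂ := by
  simp [wordPerm]

lemma adjT_mul_self (c : ℕ) : adjT n c * adjT n c = 1 := by
  unfold adjT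
  split
  · exact Equiv.swap_mul_self _ _
  · simp

lemma adjT_inv (c : ℕ) : (adjT n c)⁻¹ = adjT n c := by
  rw [inv_eq_iff_mul_eq_one, adjT_mul_self]

lemma wordPerm_reverse (l : List ℕ) :
    wordPerm n l.reverse = (wordPerm n l)⁻¹ := by
  induction l with
  | nil => simp [wordPerm]
  | cons c l ih =>
      rw [List.reverse_cons, wordPerm_append, wordPerm_cons, ih]
      simp [wordPerm, adjT_inv, mul_assoc]

/-- If every letter of `l` is `≥ L`, `wordPerm` fixes positions `< L`. -/
lemma wordPerm_fix {l : List ℕ} {L : ℕ} (h : ∀ c ∈ l, L ≤ c)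
    (x : Fin n) (hx : (x : ℕ) < L) : wordPerm n l x = x := by
  induction l with
  | nil => rfl
  | cons c l ih =>
      rw [wordPerm_cons]
      have h1 : wordPerm n l x = x := ih (fun c hc => h c (List.mem_cons_of_mem _ hc))
      have hc : L ≤ c := h c (List.mem_cons_self)
      simp only [Equiv.Perm.mul_apply, h1]
      unfold adjT
      split
      · rename_i hcn
        rw [Equiv.swap_apply_of_ne_of_ne]
        · intro he; rw [Fin.ext_iff] at he; simp at he; omega
        · intro he; rw [Fin.ext_iff] at he; simp at he; omega
      · rfl

/-- If every letter of `l` is `≥ L`, `wordPerm` preserves positions `≥ L`. -/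
lemma wordPerm_ge {l : List ℕ} {L : ℕ} (h : ∀ c ∈ l, L ≤ c)
    (x : Fin n) (hx : L ≤ (x : ℕ)) : L ≤ (wordPerm n l x : ℕ) := by
  induction l with
  | nil => exact hx
  | cons c l ih =>
      rw [wordPerm_cons]
      have h1 := ih (fun c hc => h c (List.mem_cons_of_mem _ hc))
      have hc : L ≤ c := h c (List.mem_cons_self)
      set y := wordPerm n l x with hy
      simp only [Equiv.Perm.mul_apply]
      unfold adjT
      split
      · rename_i hcn
        rw [Equiv.swap_apply_def]
        split
        · simpa using by omega
        · split
          · simpa using by omega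
          · exact h1
      · exact h1


/-- The descending run `[j+len-1, …, j+1, j]`. -/
def runWord (j len : ℕ) : List ℕ := (List.range len).reverse.map (j + ·)

lemma runWord_succ (j len : ℕ) : runWord j (len + 1) = (j + len) :: runWord j len := by
  simp [runWord, List.range_succ]

lemma mem_runWord {j len c : ℕ} (h : c ∈ runWord j len) : j ≤ c ∧ c < j + len := by
  simp only [runWord, List.mem_map, List.mem_reverse, List.mem_range] at h
  omega

/-- Action of a descending run, bottom case: `j ↦ j + len`. -/
lemma runWord_apply_bot {j len : ℕ} (hn : j + len + 1 ≤ n) (x : Fin n) (hx : (x : ℕ) = j) :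
    (wordPerm n (runWord j len) x : ℕ) = j + len := by
  induction len with
  | zero => simpa [runWord, wordPerm]
  | succ len ih =>
      rw [runWord_succ, wordPerm_cons]
      simp only [Equiv.Perm.mul_apply]
      have h1 : (wordPerm n (runWord j len) x : ℕ) = j + len := ih (by omega)
      unfold adjT
      have hlt : j + len + 1 < n := by omega
      rw [dif_pos hlt]
      have : wordPerm n (runWord j len) x = ⟨j + len, by omega⟩ := Fin.ext h1
      rw [this, Equiv.swap_apply_left]
      show j + len + 1 = j + (len + 1)
      omega

/-- Action of a descending run: positions above `j+len` are fixed. -/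
lemma runWord_apply_top {j len : ℕ} (x : Fin n) (hx : j + len < (x : ℕ)) :
    wordPerm n (runWord j len) x = x := by
  induction len with
  | zero => rfl
  | succ len ih =>
      rw [runWord_succ, wordPerm_cons]
      simp only [Equiv.Perm.mul_apply]
      rw [ih (by omega)]
      unfold adjT
      split
      · rw [Equiv.swap_apply_of_ne_of_ne]
        · intro he; rw [Fin.ext_iff] at he; simp at he; omega
        · intro he; rw [Fin.ext_iff] at he; simp at he; omega
      · rfl

/-- Action of a descending run: positions in `(j, j+len]` move down by one. -/
lemma runWord_apply_mid {j len : ℕ} (hn : j + len + 1 ≤ n) (x : Fin n)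
    (hx1 : j < (x : ℕ)) (hx2 : (x : ℕ) ≤ j + len) :
    (wordPerm n (runWord j len) x : ℕ) = (x : ℕ) - 1 := by
  induction len with
  | zero => omega
  | succ len ih =>
      rw [runWord_succ, wordPerm_cons]
      simp only [Equiv.Perm.mul_apply]
      have hlt : j + len + 1 < n := by omega
      by_cases hc : (x : ℕ) ≤ j + len
      · have h1 : (wordPerm n (runWord j len) x : ℕ) = (x : ℕ) - 1 := ih (by omega) hc
        unfold adjT
        rw [dif_pos hlt]
        rw [Equiv.swap_apply_of_ne_of_ne]
        · exact h1
        · intro he; rw [Fin.ext_iff] at he; simp at he; omega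
        · intro he; rw [Fin.ext_iff] at he; simp at he; omega
      · -- x = j + len + 1
        have hx : (x : ℕ) = j + len + 1 := by omega
        rw [runWord_apply_top x (by omega)]
        unfold adjT
        rw [dif_pos hlt]
        have : x = ⟨j + len + 1, by omega⟩ := Fin.ext hx
        rw [this, Equiv.swap_apply_right]
        simp [hx]

/-- The list of positions of the full rows `0, …, k-1` in `rcLE` order. -/
def fullList (n k : ℕ) : List (ℕ × ℕ) :=
  (List.range k).flatMap (fun j => (List.range (n - 1 - j)).reverse.map (fun b => (j, b)))

/-- The word of the full rows. -/
def fullWord (n k : ℕ) : List ℕ := (List.range k).flatMap (fun j => runWord j (n - 1 - j))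

lemma fullList_map_word (k : ℕ) :
    (fullList n k).map (fun p => p.1 + p.2) = fullWord n k := by
  simp [fullList, fullWord, List.map_flatMap, runWord]
  rfl

lemma mem_fullList {k : ℕ} {q : ℕ × ℕ} :
    q ∈ fullList n k ↔ q.1 < k ∧ q.1 + q.2 + 2 ≤ n := by
  constructor
  · intro h
    simp only [fullList, List.mem_flatMap, List.mem_range, List.mem_map,
      List.mem_reverse] at h
    obtain ⟨j, hj, b, hb, rfl⟩ := h
    simp at hb ⊢; omega
  · intro ⟨h1, h2⟩
    simp only [fullList, List.mem_flatMap, List.mem_range, List.mem_map, List.mem_reverse]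
    exact ⟨q.1, h1, ⟨q.2, by omega, rfl⟩⟩

/-- Action of the full-rows permutation: `x ↦ x - k` for `x ≥ k`. -/
lemma fullWord_apply : ∀ {k : ℕ}, k ≤ n - 1 → ∀ x : Fin n, k ≤ (x : ℕ) →
    (wordPerm n (fullWord n k) x : ℕ) = (x : ℕ) - k := by
  intro k
  induction k with
  | zero => intro _ x _; rfl
  | succ k ih =>
      intro hk x hx
      have hw : fullWord n (k + 1) = fullWord n k ++ runWord k (n - 1 - k) := by
        simp [fullWord, List.range_succ]
      rw [hw, wordPerm_append]
      simp only [Equiv.Perm.mul_apply]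
      have hxn : (x : ℕ) < n := x.isLt
      have hn2 : 2 ≤ n := by omega
      have h1 : (wordPerm n (runWord k (n - 1 - k)) x : ℕ) = (x : ℕ) - 1 :=
        runWord_apply_mid (by omega) x (by omega) (by omega)
      have h2 := ih (by omega) (wordPerm n (runWord k (n - 1 - k)) x) (by omega)
      omega

lemma invLength_eq_card (u : Perm' n) :
    invLength u = (Finset.univ.filter
      (fun x : Fin n × Fin n => x.1 < x.2 ∧ u x.2 < u x.1)).card := rfl

/-- Description of `t`-reversed increasing pairs, refined by a predicate. -/
lemma rev_pairs_card {i j : Fin n} (hij : i < j) (P : Fin n × Fin n → Prop)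
    [DecidablePred P] :
    (Finset.univ.filter (fun x : Fin n × Fin n =>
        x.1 < x.2 ∧ Equiv.swap i j x.2 < Equiv.swap i j x.1 ∧ P x)).card =
      ((Finset.Ioo i j).filter (fun m => P (i, m))).card +
      ((Finset.Ioo i j).filter (fun m => P (m, j))).card +
      (if P (i, j) then 1 else 0) := by
  set t := Equiv.swap i j with ht
  have hti : t i = j := Equiv.swap_apply_left i j
  have htj : t j = i := Equiv.swap_apply_right i j
  have htm : ∀ m : Fin n, m ≠ i → m ≠ j → t m = m := fun m h1 h2 =>
    Equiv.swap_apply_of_ne_of_ne h1 h2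
  have hset : (Finset.univ.filter (fun x : Fin n × Fin n =>
        x.1 < x.2 ∧ t x.2 < t x.1 ∧ P x)) =
      (((Finset.Ioo i j).filter (fun m => P (i, m))).image (fun m => (i, m)) ∪
        ((Finset.Ioo i j).filter (fun m => P (m, j))).image (fun m => (m, j))) ∪
      (if P (i, j) then {(i, j)} else ∅) := by
    ext x
    simp only [Finset.mem_filter, Finset.mem_univ, true_and, Finset.mem_union,
      Finset.mem_image, Finset.mem_Ioo]
    constructor
    · rintro ⟨h1, h2, hP⟩
      by_cases e1 : x.1 = i
      · by_cases e2 : x.2 = j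
        · have : x = (i, j) := by rw [Prod.ext_iff]; exact ⟨e1, e2⟩
          rw [this] at hP ⊢
          simp [hP]
        · have e2' : x.2 ≠ i := by intro h; rw [e1, h] at h1; exact lt_irrefl _ h1
          have : t x.2 = x.2 := htm _ e2' e2
          rw [this, e1, hti] at h2
          left; left
          exact ⟨x.2, ⟨⟨e1 ▸ h1, h2⟩, by rw [← e1]; exact hP⟩, by rw [← e1]⟩
      · by_cases e1' : x.1 = j
        · exfalso
          have e2 : x.2 ≠ i := fun h => by
            rw [e1', h] at h1; exact absurd (hij.trans h1) (lt_irrefl _)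
          have e2' : x.2 ≠ j := fun h => by rw [e1', h] at h1; exact lt_irrefl _ h1
          rw [htm _ e2 e2', e1', htj] at h2
          rw [e1'] at h1
          exact absurd (h2.trans (hij.trans h1)) (lt_irrefl _)
        · have hx1 : t x.1 = x.1 := htm _ e1 e1'
          by_cases e2 : x.2 = j
          · rw [hx1, e2, htj] at h2
            left; right
            exact ⟨x.1, ⟨⟨h2, e2 ▸ h1⟩, by rw [← e2]; exact hP⟩, by rw [← e2]⟩
          · exfalso
            by_cases e2' : x.2 = i
            · rw [hx1, e2', hti] at h2
              rw [e2'] at h1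
              exact absurd ((h1.trans hij).trans h2) (lt_irrefl _)
            · rw [hx1, htm _ e2' e2] at h2
              exact absurd (h1.trans h2) (lt_irrefl _)
    · intro h
      rcases h with (⟨m, ⟨⟨hm1, hm2⟩, hPm⟩, rfl⟩ | ⟨m, ⟨⟨hm1, hm2⟩, hPm⟩, rfl⟩) | h
      · have : t m = m := htm m (fun h => by rw [h] at hm1; exact lt_irrefl _ hm1)
          (fun h => by rw [h] at hm2; exact lt_irrefl _ hm2)
        exact ⟨hm1, by rw [this, hti]; exact hm2, hPm⟩
      · have : t m = m := htm m (fun h => by rw [h] at hm1; exact lt_irrefl _ hm1)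
          (fun h => by rw [h] at hm2; exact lt_irrefl _ hm2)
        exact ⟨hm2, by rw [this, htj]; exact hm1, hPm⟩
      · by_cases hP : P (i, j)
        · rw [if_pos hP] at h
          simp only [Finset.mem_singleton] at h
          rw [h]
          exact ⟨hij, by rw [hti, htj]; exact hij, hP⟩
        · rw [if_neg hP] at h; simp at h
  rw [hset]
  have hd1 : Disjoint
      (((Finset.Ioo i j).filter (fun m => P (i, m))).image (fun m => (i, m)))
      (((Finset.Ioo i j).filter (fun m => P (m, j))).image (fun m => (m, j))) := by
    rw [Finset.disjoint_left]
    rintro x hx1 hx2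
    simp only [Finset.mem_image, Finset.mem_filter, Finset.mem_Ioo] at hx1 hx2
    obtain ⟨m, ⟨⟨hm1, _⟩, _⟩, rfl⟩ := hx1
    obtain ⟨m', ⟨⟨hm1', hm2'⟩, _⟩, he⟩ := hx2
    rw [Prod.ext_iff] at he
    simp only at he
    rw [he.1] at hm1'
    exact absurd hm1' (lt_irrefl _)
  have hd2 : Disjoint
      ((((Finset.Ioo i j).filter (fun m => P (i, m))).image (fun m => (i, m)) ∪
        ((Finset.Ioo i j).filter (fun m => P (m, j))).image (fun m => (m, j))))
      (if P (i, j) then ({(i, j)} : Finset (Fin n × Fin n)) else ∅) := by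
    rw [Finset.disjoint_right]
    intro x hx
    split at hx
    · simp only [Finset.mem_singleton] at hx
      subst hx
      simp only [Finset.mem_union, Finset.mem_image, Finset.mem_filter, Finset.mem_Ioo]
      rintro (⟨m, ⟨⟨hm1, hm2⟩, _⟩, he⟩ | ⟨m, ⟨⟨hm1, hm2⟩, _⟩, he⟩) <;>
        (rw [Prod.ext_iff] at he; simp only at he)
      · rw [he.2] at hm2; exact absurd hm2 (lt_irrefl _)
      · rw [he.1] at hm1; exact absurd hm1 (lt_irrefl _)
    · simp at hx
  rw [Finset.card_union_of_disjoint hd2, Finset.card_union_of_disjoint hd1,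
    Finset.card_image_of_injective _ (fun a b h => by simpa [Prod.ext_iff] using h),
    Finset.card_image_of_injective _ (fun a b h => by simpa [Prod.ext_iff] using h)]
  congr 1
  split <;> simp

/-- Key length formula: right multiplication by a transposition `(i j)` with
`u i < u j` increases the inversion number by `1 + 2·#(intermediate values)`. -/
lemma invLength_mul_swap (u : Perm' n) (i j : Fin n) (hij : i < j) (huij : u i < u j) :
    invLength (u * Equiv.swap i j) =
      invLength u + 1 +
        2 * ((Finset.Ioo i j).filter (fun m => u i < u m ∧ u m < u j)).card := by
  classical
  set t := Equiv.swap i j with ht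
  set S1 := (Finset.univ.filter (fun x : Fin n × Fin n =>
      x.1 < x.2 ∧ t x.2 < t x.1 ∧ u x.2 < u x.1)).card with hS1
  set S2 := (Finset.univ.filter (fun x : Fin n × Fin n =>
      x.1 < x.2 ∧ t x.2 < t x.1 ∧ ¬ u x.2 < u x.1)).card with hS2
  set S2' := (Finset.univ.filter (fun x : Fin n × Fin n =>
      t x.1 < t x.2 ∧ x.2 < x.1 ∧ u x.2 < u x.1)).card with hS2'
  have claim1 : invLength (u * t) + S1 = invLength u + S2' := by
    have hinv : invLength (u * t) = ∑ x : Fin n × Fin n,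
        (if t x.1 < t x.2 ∧ u x.2 < u x.1 then 1 else 0) := by
      rw [invLength_eq_card, Finset.card_filter]
      rw [← Equiv.sum_comp (Equiv.prodCongr t t) (fun x : Fin n × Fin n =>
        if x.1 < x.2 ∧ (u * t) x.2 < (u * t) x.1 then 1 else 0)]
      apply Finset.sum_congr rfl
      intro x _
      have h1 : (u * t) (Equiv.prodCongr t t x).1 = u x.1 := by
        simp [ht, Equiv.swap_apply_self]
      have h2 : (u * t) (Equiv.prodCongr t t x).2 = u x.2 := by
        simp [ht, Equiv.swap_apply_self]
      rw [h1, h2]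
      rfl
    rw [hinv, invLength_eq_card, Finset.card_filter, hS1, hS2',
      Finset.card_filter, Finset.card_filter, ← Finset.sum_add_distrib,
      ← Finset.sum_add_distrib]
    apply Finset.sum_congr rfl
    intro x _
    by_cases hR : u x.2 < u x.1
    · rcases lt_trichotomy x.1 x.2 with h | h | h
      · rcases lt_trichotomy (t x.1) (t x.2) with h' | h' | h'
        · simp [h, h', hR, asymm h, asymm h']
        · exact absurd (t.injective h') (ne_of_lt h)
        · simp [h, h', hR, asymm h, asymm h']
      · exact absurd (h ▸ hR) (lt_irrefl _)
      · rcases lt_trichotomy (t x.1) (t x.2) with h' | h' | h'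
        · simp [h, h', hR, asymm h, asymm h']
        · exact absurd (t.injective h') (ne_of_gt h)
        · simp [h, h', hR, asymm h, asymm h']
    · simp [hR]
  have hS2eq : S2' = S2 := by
    rw [hS2', hS2]
    apply Finset.card_bij (fun x _ => (x.2, x.1))
    · intro x hx
      simp only [Finset.mem_filter, Finset.mem_univ, true_and] at hx ⊢
      exact ⟨hx.2.1, hx.1, asymm hx.2.2⟩
    · intro x hx y hy he
      rw [Prod.ext_iff] at he
      simp only at he
      exact Prod.ext he.2 he.1
    · intro x hx
      simp only [Finset.mem_filter, Finset.mem_univ, true_and] at hx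
      refine ⟨(x.2, x.1), ?_, rfl⟩
      simp only [Finset.mem_filter, Finset.mem_univ, true_and]
      rcases lt_trichotomy (u x.1) (u x.2) with h | h | h
      · exact ⟨hx.2.1, hx.1, h⟩
      · exact absurd (u.injective h) (ne_of_lt hx.1)
      · exact absurd h hx.2.2
  have h4 : S1 = ((Finset.Ioo i j).filter (fun m => u m < u i)).card +
      ((Finset.Ioo i j).filter (fun m => u j < u m)).card := by
    rw [hS1, rev_pairs_card hij (fun x => u x.2 < u x.1)]
    simp [asymm huij]
  have h5 : S2 = ((Finset.Ioo i j).filter (fun m => ¬ u m < u i)).card +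
      ((Finset.Ioo i j).filter (fun m => ¬ u j < u m)).card + 1 := by
    rw [hS2, rev_pairs_card hij (fun x => ¬ u x.2 < u x.1)]
    simp [asymm huij, huij]
  have hA : ((Finset.Ioo i j).filter (fun m => u m < u i)).card +
      ((Finset.Ioo i j).filter (fun m => ¬ u m < u i)).card = (Finset.Ioo i j).card :=
    Finset.card_filter_add_card_filter_not _
  have hB : ((Finset.Ioo i j).filter (fun m => u j < u m)).card +
      ((Finset.Ioo i j).filter (fun m => ¬ u j < u m)).card = (Finset.Ioo i j).card :=
    Finset.card_filter_add_card_filter_not _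
  have hM : ((Finset.Ioo i j).filter (fun m => u i < u m ∧ u m < u j)).card +
      (((Finset.Ioo i j).filter (fun m => u m < u i)).card +
       ((Finset.Ioo i j).filter (fun m => u j < u m)).card) = (Finset.Ioo i j).card := by
    have hup : ∀ m ∈ Finset.Ioo i j, u m ≠ u i ∧ u m ≠ u j := by
      intro m hm
      rw [Finset.mem_Ioo] at hm
      exact ⟨fun h => absurd (u.injective h) (ne_of_gt hm.1),
        fun h => absurd (u.injective h) (ne_of_lt hm.2)⟩
    rw [← Finset.card_union_of_disjoint, ← Finset.card_union_of_disjoint]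
    · congr 1
      rw [← Finset.filter_or, ← Finset.filter_or]
      rw [Finset.filter_eq_self]
      intro m hm
      obtain ⟨h1, h2⟩ := hup m hm
      rcases lt_trichotomy (u m) (u i) with h | h | h
      · tauto
      · exact absurd h h1
      · rcases lt_trichotomy (u m) (u j) with h' | h' | h'
        · tauto
        · exact absurd h' h2
        · tauto
    · rw [Finset.disjoint_left]
      intro m hm1 hm2
      rw [Finset.mem_filter] at hm1
      rcases Finset.mem_union.1 hm2 with h | h <;> rw [Finset.mem_filter] at h
      · exact absurd (hm1.2.1.trans h.2) (lt_irrefl _)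
      · exact absurd (hm1.2.2.trans h.2) (lt_irrefl _)
    · rw [Finset.disjoint_filter]
      intro m _ h1 h2
      exact absurd (h2.trans h1) (asymm huij)
  omega

lemma invLength_one : invLength (1 : Perm' n) = 0 := by
  rw [invLength_eq_card, Finset.card_eq_zero]
  apply Finset.eq_empty_of_forall_notMem
  intro x hx
  replace hx := Finset.mem_filter.1 hx
  exact absurd (hx.2.1.trans hx.2.2) (lt_irrefl _)

lemma invLength_mul_adjT_le (u : Perm' n) (c : ℕ) :
    invLength (u * adjT n c) ≤ invLength u + 1 := by
  unfold adjT
  split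
  · rename_i hc
    set i : Fin n := ⟨c, by omega⟩
    set j : Fin n := ⟨c + 1, hc⟩
    have hij : i < j := by simp [i, j, Fin.lt_def]
    have hIoo : (Finset.Ioo i j).card = 0 := by
      rw [Finset.card_eq_zero]
      apply Finset.eq_empty_of_forall_notMem
      intro m hm
      rw [Finset.mem_Ioo, Fin.lt_def, Fin.lt_def] at hm
      simp only [i, j] at hm
      omega
    rcases lt_trichotomy (u i) (u j) with h | h | h
    · rw [invLength_mul_swap u i j hij h]
      have : ((Finset.Ioo i j).filter (fun m => u i < u m ∧ u m < u j)).card = 0 :=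
        Nat.le_zero.mp (hIoo ▸ Finset.card_filter_le _ _)
      omega
    · exact absurd (u.injective h) (ne_of_lt hij)
    · set u' := u * Equiv.swap i j with hu'
      have h1 : u' i < u' j := by
        simp only [hu', Equiv.Perm.mul_apply, Equiv.swap_apply_left, Equiv.swap_apply_right]
        exact h
      have h2 : u' * Equiv.swap i j = u := by
        rw [hu', mul_assoc, Equiv.swap_mul_self, mul_one]
      have := invLength_mul_swap u' i j hij h1
      rw [h2] at this
      omega
  · rw [mul_one]; omega

lemma invLength_wordPerm_le (l : List ℕ) : invLength (wordPerm n l) ≤ l.length := by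
  induction l using List.reverseRecOn with
  | nil => rw [wordPerm_nil, invLength_one]; simp
  | append_singleton l c ih =>
      rw [wordPerm_append]
      have : wordPerm n [c] = adjT n c := by simp [wordPerm]
      rw [this]
      calc invLength (wordPerm n l * adjT n c) ≤ invLength (wordPerm n l) + 1 :=
            invLength_mul_adjT_le _ _
        _ ≤ l.length + 1 := by omega
        _ = (l ++ [c]).length := by simp

lemma sort_eq_of_sorted {s : Finset (ℕ × ℕ)} {l : List (ℕ × ℕ)}
    (h1 : List.Pairwise rcLE l) (h2 : l.Nodup) (h3 : l.toFinset = s) :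
    s.sort rcLE = l := by
  subst h3
  exact (List.toFinset_sort rcLE h2).mpr h1

lemma rcLE_refl (p : ℕ × ℕ) : rcLE p p := by unfold rcLE; omega

lemma fullList_sorted (k : ℕ) : List.Pairwise rcLE (fullList n k) := by
  induction k with
  | zero => simp [fullList]
  | succ k ih =>
      have : fullList n (k + 1) = fullList n k ++
          (List.range (n - 1 - k)).reverse.map (fun b => (k, b)) := by
        simp [fullList, List.range_succ]
      rw [this]
      rw [List.pairwise_append]
      refine ⟨ih, ?_, ?_⟩
      · apply List.Pairwise.map (R := fun a b : ℕ => b ≤ a)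
        · intro a b h; unfold rcLE; right; exact ⟨rfl, h⟩
        · rw [List.pairwise_reverse]
          have := List.pairwise_lt_range (n := n - 1 - k)
          exact this.imp (fun h => le_of_lt h)
      · intro a ha b hb
        rw [mem_fullList] at ha
        simp only [List.mem_map, List.mem_reverse, List.mem_range] at hb
        obtain ⟨b', _, rfl⟩ := hb
        unfold rcLE
        left
        exact ha.1

lemma fullList_nodup (k : ℕ) : (fullList n k).Nodup := by
  induction k with
  | zero => simp [fullList]
  | succ k ih =>
      have : fullList n (k + 1) = fullList n k ++
          (List.range (n - 1 - k)).reverse.map (fun b => (k, b)) := by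
        simp [fullList, List.range_succ]
      rw [this, List.nodup_append]
      refine ⟨ih, ?_, ?_⟩
      · apply List.Nodup.map
        · intro a b h; rw [Prod.ext_iff] at h; exact h.2
        · rw [List.nodup_reverse]; exact List.nodup_range
      · intro q hq q' hq' hqq; subst hqq
        rw [mem_fullList] at hq
        simp only [List.mem_map, List.mem_reverse, List.mem_range] at hq'
        obtain ⟨b', _, rfl⟩ := hq'
        exact absurd rfl (ne_of_lt hq.1)

lemma rcLE_trans' {a b c : ℕ × ℕ} (h1 : rcLE a b) (h2 : rcLE b c) : rcLE a c := by
  unfold rcLE at *; omega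

lemma rcLE_total' (a b : ℕ × ℕ) : rcLE a b ∨ rcLE b a := by unfold rcLE; omega

set_option maxHeartbeats 1600000 in
/-- The main step lemma: adjoining the greedy-minimal pair produces a labeled
Bruhat cover and increases the length by exactly one. -/
lemma greedy_step_cover {S : Finset (ℕ × ℕ)} {k b : ℕ}
    (hRC : IsRC n S) (hcard : S.card = invLength (rcPerm n S))
    (hv : k + b + 2 ≤ n) (hpS : (k, b) ∉ S)
    (hmin : ∀ q : ℕ × ℕ, q.1 + q.2 + 2 ≤ n → q ∉ S →
      (k < q.1 ∨ (k = q.1 ∧ b ≤ q.2))) :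
    IsLabeledCover (rcPerm n S) (rcPerm n (insert (k, b) S)) k b ∧
      invLength (rcPerm n (insert (k, b) S)) = invLength (rcPerm n S) + 1 := by
  classical
  have hgreedy : ∀ q : ℕ × ℕ, q.1 + q.2 + 2 ≤ n →
      (q.1 < k ∨ (q.1 = k ∧ q.2 < b)) → q ∈ S := by
    intro q hq h
    by_contra hqs
    have := hmin q hq hqs
    omega
  set p : ℕ × ℕ := (k, b) with hp
  set A := S.filter (fun q => rcLE q p) with hA
  set B := S.filter (fun q => ¬ rcLE q p) with hB
  set highA := S.filter (fun q => q.1 = k ∧ b < q.2) with hhighA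
  set C := S.filter (fun q => k < q.1) with hC
  set rowTail : List (ℕ × ℕ) := (List.range b).reverse.map (fun b' => (k, b')) with hrowTail
  have hrcq : ∀ q : ℕ × ℕ, rcLE q p ↔ (q.1 < k ∨ (q.1 = k ∧ b ≤ q.2)) := by
    intro q; unfold rcLE; simp [hp]
  -- membership facts
  have hmemA : ∀ q : ℕ × ℕ, q ∈ A ↔ (q ∈ fullList n k ∨ q ∈ highA) := by
    intro q
    rw [hA, Finset.mem_filter, hrcq, mem_fullList, hhighA, Finset.mem_filter]
    constructor
    · rintro ⟨hqS, hlt | ⟨he, hb⟩⟩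
      · exact Or.inl ⟨hlt, hRC q hqS⟩
      · rcases Nat.lt_or_ge b q.2 with h | h
        · exact Or.inr ⟨hqS, he, h⟩
        · exfalso
          have : q.2 = b := by omega
          apply hpS
          have : q = p := by rw [hp, Prod.ext_iff]; exact ⟨he, this⟩
          rwa [← this]
    · rintro (⟨h1, h2⟩ | ⟨h1, h2, h3⟩)
      · exact ⟨hgreedy q h2 (Or.inl h1), Or.inl h1⟩
      · exact ⟨h1, Or.inr ⟨h2, by omega⟩⟩
  have hmemB : ∀ q : ℕ × ℕ, q ∈ B ↔ (q ∈ rowTail ∨ q ∈ C) := by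
    intro q
    rw [hB, Finset.mem_filter, hrcq, hC, Finset.mem_filter, hrowTail]
    simp only [List.mem_map, List.mem_reverse, List.mem_range]
    constructor
    · rintro ⟨hqS, hn'⟩
      rcases Nat.lt_trichotomy q.1 k with h | h | h
      · exact absurd (Or.inl h) hn'
      · left
        refine ⟨q.2, ?_, ?_⟩
        · rcases Nat.lt_or_ge q.2 b with h2 | h2
          · exact h2
          · exact absurd (Or.inr ⟨h, h2⟩) hn'
        · rw [Prod.ext_iff]; exact ⟨h.symm, rfl⟩
      · exact Or.inr ⟨hqS, h⟩
    · rintro (⟨b', hb', rfl⟩ | ⟨h1, h2⟩)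
      · constructor
        · exact hgreedy _ (by simp; omega) (by simp; omega)
        · simp; omega
      · exact ⟨h1, by omega⟩
  -- sorted decompositions
  have c1 : A.sort rcLE = fullList n k ++ highA.sort rcLE := by
    apply sort_eq_of_sorted
    · rw [List.pairwise_append]
      refine ⟨fullList_sorted k, Finset.pairwise_sort _ _, ?_⟩
      intro a ha b' hb'
      rw [mem_fullList] at ha
      rw [Finset.mem_sort, hhighA, Finset.mem_filter] at hb'
      unfold rcLE
      omega
    · rw [List.nodup_append]
      refine ⟨fullList_nodup k, Finset.sort_nodup _ _, ?_⟩
      intro q hq q' hq' hqq; subst hqq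
      rw [mem_fullList] at hq
      rw [Finset.mem_sort, hhighA, Finset.mem_filter] at hq'
      omega
    · ext q
      rw [List.mem_toFinset, List.mem_append, hmemA q, Finset.mem_sort]
  have c2 : S.sort rcLE = A.sort rcLE ++ B.sort rcLE := by
    apply sort_eq_of_sorted
    · rw [List.pairwise_append]
      refine ⟨Finset.pairwise_sort _ _, Finset.pairwise_sort _ _, ?_⟩
      intro a ha b' hb'
      rw [Finset.mem_sort, hA, Finset.mem_filter] at ha
      rw [Finset.mem_sort, hB, Finset.mem_filter] at hb'
      rcases rcLE_total' p b' with h | h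
      · exact rcLE_trans' ha.2 h
      · exact absurd h hb'.2
    · rw [List.nodup_append]
      refine ⟨Finset.sort_nodup _ _, Finset.sort_nodup _ _, ?_⟩
      intro q hq q' hq' hqq; subst hqq
      rw [Finset.mem_sort, hA, Finset.mem_filter] at hq
      rw [Finset.mem_sort, hB, Finset.mem_filter] at hq'
      exact hq'.2 hq.2
    · ext q
      rw [List.mem_toFinset, List.mem_append, Finset.mem_sort, Finset.mem_sort,
        hA, hB, Finset.mem_filter, Finset.mem_filter]
      by_cases h : rcLE q p <;> by_cases h2 : q ∈ S <;> simp [h, h2]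
  have c3 : B.sort rcLE = rowTail ++ C.sort rcLE := by
    apply sort_eq_of_sorted
    · rw [List.pairwise_append]
      refine ⟨?_, Finset.pairwise_sort _ _, ?_⟩
      · apply List.Pairwise.map (R := fun a b : ℕ => b ≤ a)
        · intro a b h; unfold rcLE; right; exact ⟨rfl, h⟩
        · rw [List.pairwise_reverse]
          exact (List.pairwise_lt_range (n := b)).imp (fun h => le_of_lt h)
      · intro a ha b' hb'
        simp only [hrowTail, List.mem_map, List.mem_reverse, List.mem_range] at ha
        obtain ⟨b'', _, rfl⟩ := ha
        rw [Finset.mem_sort, hC, Finset.mem_filter] at hb'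
        unfold rcLE
        left
        exact hb'.2
    · rw [List.nodup_append]
      refine ⟨?_, Finset.sort_nodup _ _, ?_⟩
      · apply List.Nodup.map
        · intro a b h; rw [Prod.ext_iff] at h; exact h.2
        · rw [List.nodup_reverse]; exact List.nodup_range
      · intro q hq q' hq' hqq; subst hqq
        simp only [hrowTail, List.mem_map, List.mem_reverse, List.mem_range] at hq
        obtain ⟨b'', _, rfl⟩ := hq
        rw [Finset.mem_sort, hC, Finset.mem_filter] at hq'
        simp at hq'
    · ext q
      rw [List.mem_toFinset, List.mem_append, Finset.mem_sort]
      exact (hmemB q).symm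
  have c4 : (insert p S).sort rcLE = A.sort rcLE ++ p :: B.sort rcLE := by
    have hApB : ∀ a ∈ A.sort rcLE, rcLE a p := by
      intro a ha
      rw [Finset.mem_sort, hA, Finset.mem_filter] at ha
      exact ha.2
    have hpB : ∀ b' ∈ B.sort rcLE, rcLE p b' := by
      intro b' hb'
      rw [Finset.mem_sort, hB, Finset.mem_filter] at hb'
      rcases rcLE_total' p b' with h | h
      · exact h
      · exact absurd h hb'.2
    apply sort_eq_of_sorted
    · rw [List.pairwise_append]
      refine ⟨Finset.pairwise_sort _ _, ?_, ?_⟩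
      · rw [List.pairwise_cons]
        exact ⟨hpB, Finset.pairwise_sort _ _⟩
      · intro a ha b' hb'
        rcases List.mem_cons.1 hb' with rfl | hb'
        · exact hApB a ha
        · exact rcLE_trans' (hApB a ha) (hpB b' hb')
    · rw [List.nodup_append]
      refine ⟨Finset.sort_nodup _ _, ?_, ?_⟩
      · rw [List.nodup_cons]
        refine ⟨?_, Finset.sort_nodup _ _⟩
        intro h
        rw [Finset.mem_sort, hB, Finset.mem_filter] at h
        exact hpS h.1
      · intro q hq q' hq' hqq; subst hqq
        rw [Finset.mem_sort, hA, Finset.mem_filter] at hq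
        rcases List.mem_cons.1 hq' with rfl | hq'
        · exact hpS hq.1
        · rw [Finset.mem_sort, hB, Finset.mem_filter] at hq'
          exact hq'.2 hq.2
    · ext q
      rw [List.mem_toFinset, List.mem_append, List.mem_cons, Finset.mem_sort,
        Finset.mem_sort, Finset.mem_insert, hA, hB, Finset.mem_filter, Finset.mem_filter]
      by_cases h : rcLE q p <;> by_cases h2 : q ∈ S <;> by_cases h3 : q = p <;>
        simp [h, h2, h3]
  -- words
  set wordA := (A.sort rcLE).map (fun q => q.1 + q.2) with hwordA
  set wordB := (B.sort rcLE).map (fun q => q.1 + q.2) with hwordB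
  set wordH := (highA.sort rcLE).map (fun q => q.1 + q.2) with hwordH
  set wordC := (C.sort rcLE).map (fun q => q.1 + q.2) with hwordC
  have hwS : rcWord S = wordA ++ wordB := by
    rw [rcWord, c2, List.map_append]
  have hwI : rcWord (insert p S) = wordA ++ (k + b) :: wordB := by
    rw [rcWord, c4, List.map_append, List.map_cons]
  have hwA : wordA = fullWord n k ++ wordH := by
    rw [hwordA, c1, List.map_append, fullList_map_word]
  have hwB : wordB = runWord k b ++ wordC := by
    rw [hwordB, c3, List.map_append, hrowTail, List.map_map]
    rfl
  have hlH : ∀ c ∈ wordH, k + b + 1 ≤ c := by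
    intro c hc
    rw [hwordH, List.mem_map] at hc
    obtain ⟨q, hq, rfl⟩ := hc
    rw [Finset.mem_sort, hhighA, Finset.mem_filter] at hq
    omega
  have hlC : ∀ c ∈ wordC, k + 1 ≤ c := by
    intro c hc
    rw [hwordC, List.mem_map] at hc
    obtain ⟨q, hq, rfl⟩ := hc
    rw [Finset.mem_sort, hC, Finset.mem_filter] at hq
    omega
  -- permutations
  set F := wordPerm n (fullWord n k) with hF
  set E := wordPerm n wordH with hE
  set D := wordPerm n (runWord k b) with hD
  set PC := wordPerm n wordC with hPC
  set PA := wordPerm n wordA with hPAdef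
  set PB := wordPerm n wordB with hPBdef
  have hPA : PA = F * E := by rw [hPAdef, hwA, wordPerm_append]
  have hPB : PB = D * PC := by rw [hPBdef, hwB, wordPerm_append]
  have hu : rcPerm n S = PA * PB := by rw [rcPerm, hwS, wordPerm_append]
  have hw' : rcPerm n (insert p S) = PA * (adjT n (k + b) * PB) := by
    rw [rcPerm, hwI, wordPerm_append, wordPerm_cons]
  -- distinguished positions
  set xk : Fin n := ⟨k, by omega⟩ with hxk
  set y0 : Fin n := ⟨k + b, by omega⟩ with hy0
  set y1 : Fin n := ⟨k + b + 1, by omega⟩ with hy1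
  have hPCk : PC xk = xk := wordPerm_fix hlC xk (by simp [hxk])
  have hDk : D xk = y0 := by
    apply Fin.ext
    rw [hD]
    exact runWord_apply_bot (by omega) xk (by simp [hxk])
  have hPBk : PB xk = y0 := by
    rw [hPB]
    simp only [Equiv.Perm.mul_apply]
    rw [hPCk, hDk]
  have hE0 : E y0 = y0 := wordPerm_fix hlH y0 (by simp [hy0])
  have hF0 : (F y0 : ℕ) = b := by
    rw [hF]
    have := fullWord_apply (n := n) (k := k) (by omega) y0 (by simp [hy0])
    rw [this]
    simp [hy0]
  have huk : ((rcPerm n S) xk : ℕ) = b := by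
    rw [hu]
    simp only [Equiv.Perm.mul_apply]
    rw [hPBk, hPA]
    simp only [Equiv.Perm.mul_apply]
    rw [hE0]
    exact hF0
  set j' : Fin n := PC⁻¹ y1 with hj'def
  have hj'1 : k + 1 ≤ (j' : ℕ) := by
    rw [hj'def, ← wordPerm_reverse]
    apply wordPerm_ge
    · intro c hc
      rw [List.mem_reverse] at hc
      exact hlC c hc
    · simp [hy1]
  have hPCj' : PC j' = y1 := by rw [hj'def]; exact Equiv.apply_symm_apply _ _
  have hDy1 : D y1 = y1 := by rw [hD]; exact runWord_apply_top y1 (by simp [hy1])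
  have hPBj' : PB j' = y1 := by
    rw [hPB]
    simp only [Equiv.Perm.mul_apply]
    rw [hPCj', hDy1]
  set z : Fin n := E y1 with hz
  have hzge : k + b + 1 ≤ (z : ℕ) := by
    rw [hz, hE]
    apply wordPerm_ge hlH
    simp [hy1]
  have huj' : ((rcPerm n S) j' : ℕ) = (z : ℕ) - k := by
    rw [hu]
    simp only [Equiv.Perm.mul_apply]
    rw [hPBj', hPA]
    simp only [Equiv.Perm.mul_apply]
    rw [← hz, hF]
    exact fullWord_apply (by omega) z (by omega)
  have hltkj : xk < j' := by
    rw [Fin.lt_def]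
    simp only [hxk]
    omega
  have hult : (rcPerm n S) xk < (rcPerm n S) j' := by
    rw [Fin.lt_def, huk, huj']
    omega
  have hadjT : adjT n (k + b) = Equiv.swap y0 y1 := by
    unfold adjT
    rw [dif_pos (by omega : k + b + 1 < n)]
  have hswap : Equiv.swap xk j' = PB⁻¹ * adjT n (k + b) * PB := by
    have h1 : PB⁻¹ y0 = xk := by rw [← hPBk]; exact Equiv.symm_apply_apply _ _
    have h2 : PB⁻¹ y1 = j' := by rw [← hPBj']; exact Equiv.symm_apply_apply _ _
    rw [← h1, ← h2, hadjT, Equiv.swap_apply_apply, inv_inv]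
  have hw2 : rcPerm n (insert p S) = rcPerm n S * Equiv.swap xk j' := by
    rw [hw', hu, hswap]
    simp [mul_assoc, mul_inv_cancel_left]
  have hform := invLength_mul_swap (rcPerm n S) xk j' hltkj hult
  rw [← hw2] at hform
  have hlen : invLength (rcPerm n (insert p S)) ≤ S.card + 1 := by
    have h1 := invLength_wordPerm_le (n := n) (rcWord (insert p S))
    rw [← rcPerm] at h1
    have h2 : (rcWord (insert p S)).length = S.card + 1 := by
      rw [rcWord, List.length_map, Finset.length_sort,
        Finset.card_insert_of_notMem hpS]
    omega
  have hM : ((Finset.Ioo xk j').filter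
      (fun m => (rcPerm n S) xk < (rcPerm n S) m ∧ (rcPerm n S) m < (rcPerm n S) j')).card
      = 0 := by omega
  rw [Finset.card_eq_zero] at hM
  constructor
  · refine ⟨xk, j', hltkj, hult, ?_, hw2, ?_, ?_, huk.symm⟩
    · intro m h1 h2 hcon
      have : m ∈ (Finset.Ioo xk j').filter
          (fun m => (rcPerm n S) xk < (rcPerm n S) m ∧ (rcPerm n S) m < (rcPerm n S) j') := by
        rw [Finset.mem_filter, Finset.mem_Ioo]
        exact ⟨⟨h1, h2⟩, hcon⟩
      rw [hM] at this
      exact absurd this (Finset.notMem_empty m)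
    · simp [hxk]
    · omega
  · omega

lemma greedy_unique {R' : Finset (ℕ × ℕ)} {p q : ℕ × ℕ}
    (hp : p ∉ R') (hq : q ∉ R') (h : insert p R' = insert q R') : p = q := by
  have : p ∈ insert q R' := h ▸ Finset.mem_insert_self p R'
  rcases Finset.mem_insert.1 this with h' | h'
  · exact h'
  · exact absurd h' hp


end Greedy

open Greedy in
/-- In the greedy sequence of an rc-graph `R ∈ 𝓡(w)`, if `R_{i+1}`
is obtained from `R_i` by adding the pair `(k,b)`, then `(k,b)` is a valid label of the
Bruhat cover `w(R_i) ⋖ w(R_{i+1})` in the labeled Bruhat order; moreover the resulting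
labeled chain from `w` to `w₀` is increasing. -/
theorem greedy_sequence_labeled_increasing (n : ℕ) (w : Perm' n) (R : Finset (ℕ × ℕ)) (hR : AssocRC n R w)
    (Rs : ℕ → Finset (ℕ × ℕ)) (hR0 : Rs 0 = R)
    (hstep : ∀ i < invLength (w0 n) - invLength w, GreedyStep n (Rs i) (Rs (i + 1))) :
    (∀ i < invLength (w0 n) - invLength w, ∀ p : ℕ × ℕ,
        p ∉ Rs i → Rs (i + 1) = insert p (Rs i) →
        IsLabeledCover (rcPerm n (Rs i)) (rcPerm n (Rs (i + 1))) p.1 p.2) ∧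
    (∀ i j : ℕ, i < j → j < invLength (w0 n) - invLength w → ∀ p q : ℕ × ℕ,
        p ∉ Rs i → Rs (i + 1) = insert p (Rs i) →
        q ∉ Rs j → Rs (j + 1) = insert q (Rs j) → lexLt p q) := by
  
  classical
  set m := invLength (w0 n) - invLength w with hm
  -- the invariant
  have inv : ∀ i, i ≤ m → IsRC n (Rs i) ∧ (Rs i).card = invLength (rcPerm n (Rs i)) := by
    intro i
    induction i with
    | zero =>
        intro _
        rw [hR0]
        exact ⟨hR.1, by rw [hR.2.1]; exact hR.2.2⟩
    | succ i ih =>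
        intro hi
        obtain ⟨hRC, hcard⟩ := ih (by omega)
        obtain ⟨p₀, hp₀1, hp₀2, hp₀3, hp₀4⟩ := hstep i (by omega)
        have hcover := greedy_step_cover (S := Rs i) (k := p₀.1) (b := p₀.2)
          hRC hcard hp₀2 hp₀1 hp₀3
        constructor
        · intro q hq
          rw [hp₀4] at hq
          rcases Finset.mem_insert.1 hq with rfl | hq
          · exact hp₀2
          · exact hRC q hq
        · rw [hp₀4, Finset.card_insert_of_notMem hp₀1]
          have : insert (p₀.1, p₀.2) (Rs i) = insert p₀ (Rs i) := rfl
          rw [this] at hcover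
          omega
  have part1 : ∀ i < m, ∀ p : ℕ × ℕ,
      p ∉ Rs i → Rs (i + 1) = insert p (Rs i) →
      IsLabeledCover (rcPerm n (Rs i)) (rcPerm n (Rs (i + 1))) p.1 p.2 := by
    intro i hi p hp hins
    obtain ⟨hRC, hcard⟩ := inv i (by omega)
    obtain ⟨p₀, hp₀1, hp₀2, hp₀3, hp₀4⟩ := hstep i hi
    have hpp : p = p₀ := greedy_unique hp hp₀1 (by rw [← hins, hp₀4])
    subst hpp
    have hcover := greedy_step_cover (S := Rs i) (k := p.1) (b := p.2)
      hRC hcard hp₀2 hp₀1 hp₀3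
    have : insert (p.1, p.2) (Rs i) = insert p (Rs i) := rfl
    rw [this] at hcover
    rw [hins]
    exact hcover.1
  refine ⟨part1, ?_⟩
  -- monotonicity
  have mono : ∀ i j : ℕ, i ≤ j → j ≤ m → Rs i ⊆ Rs j := by
    intro i j hij hjm
    induction j with
    | zero =>
        have : i = 0 := by omega
        rw [this]
    | succ j ih =>
        rcases Nat.lt_or_ge i (j + 1) with h | h
        · have h1 : Rs i ⊆ Rs j := ih (by omega) (by omega)
          obtain ⟨p₀, _, _, _, hp₀4⟩ := hstep j (by omega)
          rw [hp₀4]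
          exact h1.trans (Finset.subset_insert _ _)
        · have : i = j + 1 := by omega
          rw [this]
  intro i j hij hjm p q hp hinsp hq hinsq
  obtain ⟨p₀, hp₀1, hp₀2, hp₀3, hp₀4⟩ := hstep i (by omega)
  obtain ⟨q₀, hq₀1, hq₀2, hq₀3, hq₀4⟩ := hstep j hjm
  have hpp : p = p₀ := greedy_unique hp hp₀1 (by rw [← hinsp, hp₀4])
  have hqq : q = q₀ := greedy_unique hq hq₀1 (by rw [← hinsq, hq₀4])
  subst hpp; subst hqq
  have hqi : q ∉ Rs i := fun h => hq (mono i j (by omega) (by omega) h)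
  have hmin := hp₀3 q hq₀2 hqi
  have hpj : p ∈ Rs j := mono (i + 1) j (by omega) (by omega)
    (hp₀4 ▸ Finset.mem_insert_self p (Rs i))
  have hpq : p ≠ q := fun h => hq (h ▸ hpj)
  unfold lexLt
  rcases hmin with h | h
  · exact Or.inl h
  · right
    refine ⟨h.1, ?_⟩
    rcases Nat.lt_or_ge p.2 q.2 with h2 | h2
    · exact h2
    · exfalso
      apply hpq
      rw [Prod.ext_iff]
      exact ⟨h.1, by omega⟩
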